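/- arXiv:2010.10619 — 5 statements merged into one kernel-verified Lean document; each statement's English description precedes it below -/
import Mathlib

section
/- Fix x ∈ ℝ^n. Suppose for each w ∈ W: C_w ⊆ ℝ^m is nonempty and compact; u ↦ c^w(x,u) is real-valued and continuous on C_w; u ↦ f^w(x,u) is continuous on C_w; and ū', l' : ℝ^n → ℝ are continuous with l'(y) ≤ ū'(y) for every y ∈ f^w(x, C_w). For each w let u^w ∈ C_w attain min_{u∈C_w}( c^w(x,u) + l'(f^w(x,u)) ), let w* ∈ argmax_{w∈W} ( ū'(f^w(x,u^w)) − l'(f^w(x,u^w)) ), and set x' = f^{w*}(x, u^{w*}). Define a = ∑_{w} p_w min_{u∈C_w}( c^w(x,u) + ū'(f^w(x,u)) ) and b = ∑_{w} p_w min_{u∈C_w}( c^w(x,u) + l'(f^w(x,u)) ). Then 0 ≤ a − b ≤ ū'(x') − l'(x'). -/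
open Filter

/-- One-step gap inequality along the problem-child
trajectory: with `a` (resp. `b`) the tight one-step average Bellman value of
the upper function `ubar` (resp. lower function `lbar`) at the fixed state `x`,
the control `uopt w` optimal for the lower approximation, the worst noise
`wstar` maximizing the future gap and `x'` the corresponding next state, one
has `0 ≤ a − b ≤ ubar x' − lbar x'`. -/
theorem statement7 {n m : ℕ} (hn : 0 < n) (hm : 0 < m)
    (W : Type) [Fintype W] [Nonempty W]
    (p : W → ℝ) (hp : ∀ w, 0 < p w) (hpsum : ∑ w, p w = 1)
    (x : EuclideanSpace ℝ (Fin n))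
    (C : W → Set (EuclideanSpace ℝ (Fin m)))
    (hCne : ∀ w, (C w).Nonempty) (hCcp : ∀ w, IsCompact (C w))
    -- the costs u ↦ c^w(x,u) and dynamics u ↦ f^w(x,u) at the fixed state x
    (c : W → EuclideanSpace ℝ (Fin m) → ℝ)
    (hccont : ∀ w, ContinuousOn (c w) (C w))
    (f : W → EuclideanSpace ℝ (Fin m) → EuclideanSpace ℝ (Fin n))
    (hfcont : ∀ w, ContinuousOn (f w) (C w))
    (ubar lbar : EuclideanSpace ℝ (Fin n) → ℝ)
    (hucont : Continuous ubar) (hlcont : Continuous lbar)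
    (hle : ∀ w, ∀ u ∈ C w, lbar (f w u) ≤ ubar (f w u))
    -- uopt w attains the minimum for the lower function
    (uopt : W → EuclideanSpace ℝ (Fin m))
    (huoptmem : ∀ w, uopt w ∈ C w)
    (huopt : ∀ w, ∀ u ∈ C w,
      c w (uopt w) + lbar (f w (uopt w)) ≤ c w u + lbar (f w u))
    -- wstar maximizes the future gap
    (wstar : W)
    (hwstar : ∀ w, ubar (f w (uopt w)) - lbar (f w (uopt w)) ≤
      ubar (f wstar (uopt wstar)) - lbar (f wstar (uopt wstar)))
    (x' : EuclideanSpace ℝ (Fin n)) (hx' : x' = f wstar (uopt wstar))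
    (a b : ℝ)
    (ha : a = ∑ w, p w * sInf ((fun u => c w u + ubar (f w u)) '' C w))
    (hb : b = ∑ w, p w * sInf ((fun u => c w u + lbar (f w u)) '' C w)) :
    0 ≤ a - b ∧ a - b ≤ ubar x' - lbar x' := by

  subst hx' ha hb
  -- per-scenario values
  set L : W → ℝ := fun w => c w (uopt w) + lbar (f w (uopt w)) with hL
  have hLinf : ∀ w, sInf ((fun u => c w u + lbar (f w u)) '' C w) = L w := by
    intro w
    apply le_antisymm
    · exact csInf_le ⟨L w, fun y ⟨u, hu, hy⟩ => hy ▸ huopt w u hu⟩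
        ⟨uopt w, huoptmem w, rfl⟩
    · exact le_csInf ((hCne w).image _) (fun y ⟨u, hu, hy⟩ => hy ▸ huopt w u hu)
  set U : W → ℝ := fun w => sInf ((fun u => c w u + ubar (f w u)) '' C w) with hU
  have hLU : ∀ w, L w ≤ U w := by
    intro w
    refine le_csInf ((hCne w).image _) ?_
    rintro y ⟨u, hu, rfl⟩
    exact le_trans (huopt w u hu) (by dsimp only; linarith [hle w u hu])
  have hUub : ∀ w, U w ≤ c w (uopt w) + ubar (f w (uopt w)) := by
    intro w
    exact csInf_le ⟨L w, fun y ⟨u, hu, hy⟩ =>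
      hy ▸ le_trans (huopt w u hu) (by dsimp only; linarith [hle w u hu])⟩
      ⟨uopt w, huoptmem w, rfl⟩
  set G : ℝ := ubar (f wstar (uopt wstar)) - lbar (f wstar (uopt wstar)) with hG
  have hGap : ∀ w, U w - L w ≤ G := by
    intro w
    have := hUub w
    have := hwstar w
    simp only [hL] at *
    linarith
  have hdiff : (∑ w, p w * U w) - (∑ w, p w * L w) = ∑ w, p w * (U w - L w) := by
    rw [← Finset.sum_sub_distrib]; congr 1; ext w; ring
  constructor
  · simp only [hLinf]
    rw [hdiff]
    exact Finset.sum_nonneg fun w _ => mul_nonneg (hp w).le (by linarith [hLU w])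
  · simp only [hLinf]
    rw [hdiff]
    calc ∑ w, p w * (U w - L w) ≤ ∑ w, p w * G :=
          Finset.sum_le_sum fun w _ => mul_le_mul_of_nonneg_left (hGap w) (hp w).le
      _ = G := by rw [← Finset.sum_mul, hpsum, one_mul]
end

section
/- Let T ≥ 1 and for each t ∈ {0,…,T} let K_t ⊆ ℝ^n be nonempty compact and L_t > 0. For each t and each k ∈ ℕ, let ū_t^k, l_t^k : K_t → ℝ be L_t-Lipschitz functions such that for all x ∈ K_t and k: l_t^k(x) ≤ l_t^{k+1}(x) ≤ ū_t^{k+1}(x) ≤ ū_t^k(x). Let points x_t^k ∈ K_t satisfy, for all k ∈ ℕ: ū_T^{k+1}(x_T^k) = l_T^{k+1}(x_T^k), and for all t ∈ {0,…,T−1}: ū_t^{k+1}(x_t^k) − l_t^{k+1}(x_t^k) ≤ ū_{t+1}^k(x_{t+1}^k) − l_{t+1}^k(x_{t+1}^k). Then for every t ∈ {0,…,T}: (i) ū_t^k(x_t^k) − l_t^k(x_t^k) → 0 as k → ∞; and (ii) denoting by ū_t* and l_t* the uniform limits on K_t of the monotone sequences (ū_t^k) and (l_t^k), one has ū_t*(x*)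 = l_t*(x*) for every accumulation point x* of the sequence (x_t^k)_{k∈ℕ}. -/
open Filter Topology

/-- Dini's theorem for antitone sequences of continuous functions on a compact set. -/
lemma tdp_dini_dec {E : Type*} [MetricSpace E] {K : Set E} (hK : IsCompact K)
    {f : ℕ → E → ℝ} {g : E → ℝ}
    (hfc : ∀ k, ContinuousOn (f k) K) (hgc : ContinuousOn g K)
    (hanti : ∀ x ∈ K, Antitone fun k => f k x)
    (hlim : ∀ x ∈ K, Tendsto (fun k => f k x) atTop (nhds (g x))) :
    TendstoUniformlyOn f g atTop K := by
  rw [Metric.tendstoUniformlyOn_iff]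
  intro ε hε
  have hge : ∀ x ∈ K, ∀ k, g x ≤ f k x := fun x hx k =>
    le_of_tendsto (hlim x hx) (eventually_atTop.2 ⟨k, fun m hm => hanti x hx hm⟩)
  have key : ∀ x ∈ K, ∃ N : ℕ, ∃ U ∈ nhds x, ∀ y ∈ U ∩ K, f N y - g y < ε := by
    intro x hx
    obtain ⟨N, hN⟩ := (Metric.tendsto_atTop.1 (hlim x hx)) (ε / 3) (by linarith)
    have h1 : f N x - g x < ε / 3 := by
      have := hN N le_rfl
      rw [Real.dist_eq, abs_lt] at this
      linarith [this.2]
    have hc1 : ContinuousWithinAt (f N) K x := hfc N x hx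
    have hc2 : ContinuousWithinAt g K x := hgc x hx
    have h2 : ∀ᶠ y in nhdsWithin x K, |f N y - f N x| < ε / 3 ∧ |g y - g x| < ε / 3 := by
      have e1 := Metric.tendsto_nhds.1 hc1 (ε / 3) (by linarith)
      have e2 := Metric.tendsto_nhds.1 hc2 (ε / 3) (by linarith)
      filter_upwards [e1, e2] with y hy1 hy2
      rw [Real.dist_eq] at hy1 hy2
      exact ⟨hy1, hy2⟩
    rw [nhdsWithin, eventually_inf_principal] at h2
    obtain ⟨U, hU, hUsub⟩ := eventually_iff_exists_mem.1 h2
    refine ⟨N, U, hU, fun y hy => ?_⟩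
    obtain ⟨h3, h4⟩ := hUsub y hy.1 hy.2
    rw [abs_lt] at h3 h4
    linarith [h3.2, h4.1]
  choose! N U hUnhds hUgood using key
  obtain ⟨s, hsK, hcover⟩ := hK.elim_nhds_subcover U (fun x hx => hUnhds x hx)
  refine eventually_atTop.2 ⟨s.sup N, fun k hk x hx => ?_⟩
  obtain ⟨z, hz, hzU⟩ := Set.mem_iUnion₂.1 (hcover hx)
  have hzK : z ∈ K := hsK z hz
  have h5 : f (N z) x - g x < ε := hUgood z hzK x ⟨hzU, hx⟩
  have h6 : f k x ≤ f (N z) x := hanti x hx (le_trans (Finset.le_sup hz) hk)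
  rw [Real.dist_eq, abs_lt]
  constructor <;> [linarith; linarith [hge x hx k]]

/-- Successive differences along moving points vanish under uniform convergence. -/
lemma tdp_diff_zero {E : Type*} [MetricSpace E] {K : Set E} {f : ℕ → E → ℝ} {F : E → ℝ}
    (h : TendstoUniformlyOn f F atTop K) {p : ℕ → E} (hp : ∀ k, p k ∈ K) :
    Tendsto (fun k => f k (p k) - f (k + 1) (p k)) atTop (nhds 0) := by
  rw [Metric.tendsto_nhds]
  intro ε hε
  have h1 := (Metric.tendstoUniformlyOn_iff.1 h) (ε / 2) (by linarith)
  obtain ⟨M, hM⟩ := eventually_atTop.1 h1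
  refine eventually_atTop.2 ⟨M, fun k hk => ?_⟩
  have a1 := hM k hk (p k) (hp k)
  have a2 := hM (k + 1) (le_trans hk (Nat.le_succ k)) (p k) (hp k)
  rw [Real.dist_eq] at a1 a2 ⊢
  rw [abs_lt] at a1 a2
  rw [sub_zero, abs_lt]
  constructor <;> linarith [a1.1, a1.2, a2.1, a2.2]

/-- Evaluation of a uniformly convergent sequence along converging points. -/
lemma tdp_eval_tendsto {E : Type*} [MetricSpace E] {K : Set E} {f : ℕ → E → ℝ} {F : E → ℝ}
    (h : TendstoUniformlyOn f F atTop K) (hc : ContinuousOn F K)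
    {σ : ℕ → ℕ} (hσ : Tendsto σ atTop atTop)
    {p : ℕ → E} (hp : ∀ k, p k ∈ K) {xs : E} (hxs : xs ∈ K)
    (hpx : Tendsto p atTop (nhds xs)) :
    Tendsto (fun k => f (σ k) (p k)) atTop (nhds (F xs)) := by
  have hpK : Tendsto p atTop (nhdsWithin xs K) :=
    tendsto_nhdsWithin_iff.2 ⟨hpx, Eventually.of_forall hp⟩
  have h2 : Tendsto (fun k => F (p k)) atTop (nhds (F xs)) := (hc xs hxs).tendsto.comp hpK
  have h2' : Tendsto (fun k => dist (F (p k)) (F xs)) atTop (nhds 0) :=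
    tendsto_iff_dist_tendsto_zero.1 h2
  have h1 : Tendsto (fun k => dist (f (σ k) (p k)) (F (p k))) atTop (nhds 0) := by
    rw [Metric.tendsto_nhds]
    intro ε hε
    have hu := (Metric.tendstoUniformlyOn_iff.1 h) ε hε
    filter_upwards [hσ.eventually hu] with k hk
    rw [Real.dist_eq, sub_zero, abs_of_nonneg dist_nonneg, dist_comm]
    exact hk (p k) (hp k)
  refine tendsto_iff_dist_tendsto_zero.2 ?_
  refine squeeze_zero (fun k => dist_nonneg)
    (fun k => dist_triangle (f (σ k) (p k)) (F (p k)) (F xs)) ?_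
  simpa using h1.add h2'


/-- Vanishing gap along the problem-child trajectory: given
monotone, sandwiched, equi-Lipschitz upper and lower approximations `ub t k`
and `lb t k` on nonempty compact sets `K t`, and trial points `xp t k ∈ K t`
with an exact gap at the final time and the gap recursion at earlier times,
(i) the gap `ub t k (xp t k) − lb t k (xp t k)` tends to `0`, and
(ii) the uniform limits `ustar` and `lstar` of `(ub t k)_k` and `(lb t k)_k`
coincide at every accumulation point of `(xp t k)_k`. -/
theorem statement8 {n : ℕ} (T : ℕ) (hT : 1 ≤ T)
    (K : ℕ → Set (EuclideanSpace ℝ (Fin n)))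
    (hKne : ∀ t ≤ T, (K t).Nonempty) (hKcp : ∀ t ≤ T, IsCompact (K t))
    (L : ℕ → ℝ) (hL : ∀ t ≤ T, 0 < L t)
    (ub lb : ℕ → ℕ → EuclideanSpace ℝ (Fin n) → ℝ)
    (hublip : ∀ t ≤ T, ∀ k, ∀ x ∈ K t, ∀ y ∈ K t,
      |ub t k x - ub t k y| ≤ L t * ‖x - y‖)
    (hlblip : ∀ t ≤ T, ∀ k, ∀ x ∈ K t, ∀ y ∈ K t,
      |lb t k x - lb t k y| ≤ L t * ‖x - y‖)
    (horder : ∀ t ≤ T, ∀ k, ∀ x ∈ K t,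
      lb t k x ≤ lb t (k + 1) x ∧ lb t (k + 1) x ≤ ub t (k + 1) x ∧
        ub t (k + 1) x ≤ ub t k x)
    (xp : ℕ → ℕ → EuclideanSpace ℝ (Fin n))
    (hxp : ∀ t ≤ T, ∀ k, xp t k ∈ K t)
    (hTeq : ∀ k, ub T (k + 1) (xp T k) = lb T (k + 1) (xp T k))
    (hgap : ∀ t < T, ∀ k,
      ub t (k + 1) (xp t k) - lb t (k + 1) (xp t k) ≤
        ub (t + 1) k (xp (t + 1) k) - lb (t + 1) k (xp (t + 1) k)) :
    ∀ t ≤ T,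
      Tendsto (fun k => ub t k (xp t k) - lb t k (xp t k)) atTop (nhds 0) ∧
      ∀ ustar lstar : EuclideanSpace ℝ (Fin n) → ℝ,
        TendstoUniformlyOn (fun k => ub t k) ustar atTop (K t) →
        TendstoUniformlyOn (fun k => lb t k) lstar atTop (K t) →
        ∀ xs : EuclideanSpace ℝ (Fin n),
          (∃ σ : ℕ → ℕ, StrictMono σ ∧
            Tendsto (fun k => xp t (σ k)) atTop (nhds xs)) →
          ustar xs = lstar xs := by
  -- continuity of the approximations
  have hcontOf : ∀ t ≤ T, ∀ (f : EuclideanSpace ℝ (Fin n) → ℝ),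
      (∀ x ∈ K t, ∀ y ∈ K t, |f x - f y| ≤ L t * ‖x - y‖) → ContinuousOn f (K t) := by
    intro t ht f hf
    refine (LipschitzOnWith.of_dist_le_mul (K := (L t).toNNReal) (fun x hx y hy => ?_)).continuousOn
    rw [Real.dist_eq, dist_eq_norm, Real.coe_toNNReal _ (hL t ht).le]
    exact hf x hx y hy
  have hubcont : ∀ t ≤ T, ∀ k, ContinuousOn (ub t k) (K t) :=
    fun t ht k => hcontOf t ht _ (hublip t ht k)
  have hlbcont : ∀ t ≤ T, ∀ k, ContinuousOn (lb t k) (K t) :=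
    fun t ht k => hcontOf t ht _ (hlblip t ht k)
  -- monotonicity
  have hubanti : ∀ t ≤ T, ∀ x ∈ K t, Antitone fun k => ub t k x :=
    fun t ht x hx => antitone_nat_of_succ_le fun k => (horder t ht k x hx).2.2
  have hlbmono : ∀ t ≤ T, ∀ x ∈ K t, Monotone fun k => lb t k x :=
    fun t ht x hx => monotone_nat_of_le_succ fun k => (horder t ht k x hx).1
  -- bounds
  have hlb0_le_ub : ∀ t ≤ T, ∀ x ∈ K t, ∀ k, lb t 0 x ≤ ub t k x := by
    intro t ht x hx k
    calc lb t 0 x ≤ lb t (k + 1) x := hlbmono t ht x hx (Nat.zero_le _)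
      _ ≤ ub t (k + 1) x := (horder t ht k x hx).2.1
      _ ≤ ub t k x := (horder t ht k x hx).2.2
  have hlb_le_ub0 : ∀ t ≤ T, ∀ x ∈ K t, ∀ k, lb t k x ≤ ub t 0 x := by
    intro t ht x hx k
    calc lb t k x ≤ lb t (k + 1) x := (horder t ht k x hx).1
      _ ≤ ub t (k + 1) x := (horder t ht k x hx).2.1
      _ ≤ ub t 0 x := hubanti t ht x hx (Nat.zero_le _)
  -- pointwise limits
  have hubptw : ∀ t ≤ T, ∀ x ∈ K t,
      Tendsto (fun k => ub t k x) atTop (nhds (⨅ k, ub t k x)) := by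
    intro t ht x hx
    exact tendsto_atTop_ciInf (hubanti t ht x hx)
      ⟨lb t 0 x, Set.forall_mem_range.2 fun k => hlb0_le_ub t ht x hx k⟩
  have hlbptw : ∀ t ≤ T, ∀ x ∈ K t,
      Tendsto (fun k => lb t k x) atTop (nhds (⨆ k, lb t k x)) := by
    intro t ht x hx
    exact tendsto_atTop_ciSup (hlbmono t ht x hx)
      ⟨ub t 0 x, Set.forall_mem_range.2 fun k => hlb_le_ub0 t ht x hx k⟩
  -- Lipschitz limits
  have hufcont : ∀ t ≤ T, ContinuousOn (fun x => ⨅ k, ub t k x) (K t) := by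
    intro t ht
    refine hcontOf t ht _ (fun x hx y hy => ?_)
    have hbx : BddBelow (Set.range fun k => ub t k x) :=
      ⟨lb t 0 x, Set.forall_mem_range.2 fun k => hlb0_le_ub t ht x hx k⟩
    have hby : BddBelow (Set.range fun k => ub t k y) :=
      ⟨lb t 0 y, Set.forall_mem_range.2 fun k => hlb0_le_ub t ht y hy k⟩
    have k1 : (⨅ k, ub t k x) - L t * ‖x - y‖ ≤ ⨅ k, ub t k y := by
      refine le_ciInf fun k => ?_
      have h1 := ciInf_le hbx k
      have h2 := hublip t ht k x hx y hy
      rw [abs_sub_le_iff] at h2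
      linarith [h2.1]
    have k2 : (⨅ k, ub t k y) - L t * ‖x - y‖ ≤ ⨅ k, ub t k x := by
      refine le_ciInf fun k => ?_
      have h1 := ciInf_le hby k
      have h2 := hublip t ht k x hx y hy
      rw [abs_sub_le_iff] at h2
      linarith [h2.2]
    rw [abs_sub_le_iff]
    exact ⟨by linarith, by linarith⟩
  have hlfcont : ∀ t ≤ T, ContinuousOn (fun x => ⨆ k, lb t k x) (K t) := by
    intro t ht
    refine hcontOf t ht _ (fun x hx y hy => ?_)
    have hbx : BddAbove (Set.range fun k => lb t k x) :=
      ⟨ub t 0 x, Set.forall_mem_range.2 fun k => hlb_le_ub0 t ht x hx k⟩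
    have hby : BddAbove (Set.range fun k => lb t k y) :=
      ⟨ub t 0 y, Set.forall_mem_range.2 fun k => hlb_le_ub0 t ht y hy k⟩
    have k1 : (⨆ k, lb t k x) ≤ (⨆ k, lb t k y) + L t * ‖x - y‖ := by
      refine ciSup_le fun k => ?_
      have h1 := le_ciSup hby k
      have h2 := hlblip t ht k x hx y hy
      rw [abs_sub_le_iff] at h2
      linarith [h2.1]
    have k2 : (⨆ k, lb t k y) ≤ (⨆ k, lb t k x) + L t * ‖x - y‖ := by
      refine ciSup_le fun k => ?_
      have h1 := le_ciSup hbx k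
      have h2 := hlblip t ht k x hx y hy
      rw [abs_sub_le_iff] at h2
      linarith [h2.2]
    rw [abs_sub_le_iff]
    exact ⟨by linarith, by linarith⟩
  -- uniform convergence (Dini)
  have hubunif : ∀ t ≤ T, TendstoUniformlyOn (fun k => ub t k)
      (fun x => ⨅ k, ub t k x) atTop (K t) :=
    fun t ht => tdp_dini_dec (hKcp t ht) (hubcont t ht) (hufcont t ht)
      (hubanti t ht) (hubptw t ht)
  have hlbunif : ∀ t ≤ T, TendstoUniformlyOn (fun k => lb t k)
      (fun x => ⨆ k, lb t k x) atTop (K t) := by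
    intro t ht
    have hneg : TendstoUniformlyOn (fun k x => -(lb t k x))
        (fun x => -(⨆ k, lb t k x)) atTop (K t) := by
      refine tdp_dini_dec (hKcp t ht) (fun k => (hlbcont t ht k).neg)
        (hlfcont t ht).neg (fun x hx => ?_) (fun x hx => (hlbptw t ht x hx).neg)
      intro a b hab
      simp only [neg_le_neg_iff]
      exact hlbmono t ht x hx hab
    rw [Metric.tendstoUniformlyOn_iff] at hneg ⊢
    intro ε hε
    filter_upwards [hneg ε hε] with k hk x hx
    have := hk x hx
    simpa only [dist_neg_neg] using this
  -- successive differences vanish along the trial points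
  have hA : ∀ t ≤ T, Tendsto
      (fun k => ub t k (xp t k) - ub t (k + 1) (xp t k)) atTop (nhds 0) :=
    fun t ht => tdp_diff_zero (hubunif t ht) (hxp t ht)
  have hB : ∀ t ≤ T, Tendsto
      (fun k => lb t (k + 1) (xp t k) - lb t k (xp t k)) atTop (nhds 0) := by
    intro t ht
    have := (tdp_diff_zero (hlbunif t ht) (hxp t ht)).neg
    simp only [neg_sub, neg_zero] at this
    exact this
  -- part (i) by downward induction
  have claim : ∀ d t, t + d = T →
      Tendsto (fun k => ub t k (xp t k) - lb t k (xp t k)) atTop (nhds 0) := by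
    intro d
    induction d with
    | zero =>
      intro t htT
      simp only [Nat.add_zero] at htT
      subst htT
      have key := (hA t le_rfl).add (hB t le_rfl)
      rw [add_zero] at key
      refine key.congr (fun k => ?_)
      have := hTeq k
      linarith
    | succ d ih =>
      intro t htT
      have htlt : t < T := by omega
      have ht : t ≤ T := htlt.le
      have ih' := ih (t + 1) (by omega)
      have hub : Tendsto (fun k =>
          (ub t k (xp t k) - ub t (k + 1) (xp t k)) +
          (lb t (k + 1) (xp t k) - lb t k (xp t k)) +
          (ub (t + 1) k (xp (t + 1) k) - lb (t + 1) k (xp (t + 1) k)))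
          atTop (nhds 0) := by
        have := ((hA t ht).add (hB t ht)).add ih'
        simpa using this
      refine squeeze_zero' ?_ ?_ hub
      · refine eventually_atTop.2 ⟨1, fun k hk => ?_⟩
        obtain ⟨m, rfl⟩ := Nat.exists_eq_succ_of_ne_zero (by omega : k ≠ 0)
        have := (horder t ht m (xp t (m + 1)) (hxp t ht (m + 1))).2.1
        linarith
      · refine Eventually.of_forall fun k => ?_
        have := hgap t htlt k
        linarith [this]
  refine fun t ht => ⟨claim (T - t) t (by omega), ?_⟩
  intro ustar lstar hu hl xs ⟨σ, hσ, hxs⟩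
  have hσtop : Tendsto σ atTop atTop := hσ.tendsto_atTop
  have hxsK : xs ∈ K t := by
    refine (hKcp t ht).isClosed.mem_of_tendsto hxs ?_
    exact Eventually.of_forall fun k => hxp t ht (σ k)
  have hucont : ContinuousOn ustar (K t) :=
    hu.continuousOn (Eventually.of_forall fun k => hubcont t ht k).frequently
  have hlcont : ContinuousOn lstar (K t) :=
    hl.continuousOn (Eventually.of_forall fun k => hlbcont t ht k).frequently
  have h1 : Tendsto (fun k => ub t (σ k) (xp t (σ k))) atTop (nhds (ustar xs)) :=
    tdp_eval_tendsto hu hucont hσtop (fun k => hxp t ht (σ k)) hxsK hxs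
  have h2 : Tendsto (fun k => lb t (σ k) (xp t (σ k))) atTop (nhds (lstar xs)) :=
    tdp_eval_tendsto hl hlcont hσtop (fun k => hxp t ht (σ k)) hxsK hxs
  have h3 : Tendsto (fun k => ub t (σ k) (xp t (σ k)) - lb t (σ k) (xp t (σ k)))
      atTop (nhds 0) := (claim (T - t) t (by omega)).comp hσtop
  have h4 := h1.sub h2
  have := tendsto_nhds_unique h4 h3
  linarith [this]
end

section
/- Suppose for each w ∈ W: c^w(x,u) = max_{i∈I_w} ( ⟨c^{i,w}, (x,u)⟩ + d^{i,w} ) for (x,u) ∈ P_w and c^w(x,u) = +∞ otherwise, where I_w is a finite nonempty index set, c^{i,w} ∈ ℝ^n × ℝ^m, d^{i,w} ∈ ℝ, and P_w ⊆ ℝ^n × ℝ^m is a nonempty convex polyhedron; and f^w(x,u) = A_w x + B_w u with matrices A_w ∈ ℝ^{n×n}, B_w ∈ ℝ^{n×m}. Let φ : ℝ^n → ℝ ∪ {+∞} be a polyhedral function, and define h(x) = ∑_{w∈W} p_w · inf_{u∈ℝ^m} ( c^w(x,u) + φ(A_w x + B_w u) ). If inf_{u∈ℝ^m}( c^w(x,u)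 + φ(A_w x + B_w u) ) > −∞ for every x ∈ ℝ^n and every w ∈ W, and h(x₀) < +∞ for some x₀ ∈ ℝ^n, then h is a polyhedral function. -/
open scoped RealInnerProductSpace

set_option maxHeartbeats 1000000

/-- A convex polyhedron: an intersection of finitely many closed halfspaces
(each halfspace being the sublevel set of a linear functional). -/
def IsPolyhedron {E : Type*} [AddCommGroup E] [Module ℝ E] (S : Set E) : Prop :=
  ∃ (k : ℕ) (φ : Fin k → E →ₗ[ℝ] ℝ) (b : Fin k → ℝ),
    S = ⋂ i, {z | φ i z ≤ b i}

/-- A polyhedral function `g : E → ℝ ∪ {+∞}`: its epigraph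
`{(z, r) : g z ≤ r}` is a nonempty convex polyhedron in `E × ℝ`. -/
def IsPolyhedralFn {E : Type*} [AddCommGroup E] [Module ℝ E] (g : E → EReal) : Prop :=
  {q : E × ℝ | g q.1 ≤ (q.2 : EReal)}.Nonempty ∧
  IsPolyhedron {q : E × ℝ | g q.1 ≤ (q.2 : EReal)}

section Aux

variable {E F : Type*} [AddCommGroup E] [Module ℝ E] [AddCommGroup F] [Module ℝ F]

lemma isPolyhedron_of_fintype {ι : Type*} [Fintype ι] (φ : ι → E →ₗ[ℝ] ℝ) (b : ι → ℝ) :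
    IsPolyhedron (⋂ i, {z | φ i z ≤ b i}) := by
  classical
  let e := Fintype.equivFin ι
  refine ⟨Fintype.card ι, fun i => φ (e.symm i), fun i => b (e.symm i), ?_⟩
  ext z
  simp only [Set.mem_iInter, Set.mem_setOf_eq]
  exact ⟨fun H i => H _, fun H i => by simpa using H (e i)⟩

lemma IsPolyhedron.preimage {S : Set F} (hS : IsPolyhedron S) (f : E →ₗ[ℝ] F) :
    IsPolyhedron (f ⁻¹' S) := by
  obtain ⟨k, φ, b, rfl⟩ := hS
  refine ⟨k, fun i => (φ i).comp f, b, ?_⟩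
  ext z; simp [Set.mem_iInter]

lemma IsPolyhedron.inter {S T : Set E} (hS : IsPolyhedron S) (hT : IsPolyhedron T) :
    IsPolyhedron (S ∩ T) := by
  obtain ⟨k, φ, b, rfl⟩ := hS
  obtain ⟨l, ψ, c, rfl⟩ := hT
  have : (⋂ i, {z | φ i z ≤ b i}) ∩ (⋂ i, {z | ψ i z ≤ c i}) =
      ⋂ i : Fin k ⊕ Fin l, {z | (Sum.elim φ ψ i) z ≤ Sum.elim b c i} := by
    ext z
    simp only [Set.mem_inter_iff, Set.mem_iInter, Set.mem_setOf_eq]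
    constructor
    · rintro ⟨h1, h2⟩ (i | i)
      · exact h1 i
      · exact h2 i
    · intro H
      exact ⟨fun i => H (Sum.inl i), fun i => H (Sum.inr i)⟩
  rw [this]
  exact isPolyhedron_of_fintype _ _

lemma linmap_decomp (f : E × ℝ →ₗ[ℝ] ℝ) (x : E) (t : ℝ) :
    f (x, t) = f (x, 0) + t * f (0, 1) := by
  have h : (x, t) = (x, (0:ℝ)) + t • ((0:E), (1:ℝ)) := by
    simp [Prod.ext_iff]
  rw [h, map_add, map_smul, smul_eq_mul]

lemma fourier_motzkin {S : Set (E × ℝ)} (hS : IsPolyhedron S) :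
    IsPolyhedron {x : E | ∃ t : ℝ, (x, t) ∈ S} := by
  obtain ⟨k, φ, b, rfl⟩ := hS
  set ψ : Fin k → E →ₗ[ℝ] ℝ := fun i => (φ i).comp (LinearMap.inl ℝ E ℝ) with hψ
  set γ : Fin k → ℝ := fun i => φ i (0, 1) with hγ
  have hdec : ∀ i (x : E) (t : ℝ), φ i (x, t) = ψ i x + t * γ i := by
    intro i x t; exact linmap_decomp (φ i) x t
  -- index type for the projected system
  let ι := {i // γ i = 0} ⊕ ({i // γ i < 0} × {j // 0 < γ j})
  let Φ : ι → E →ₗ[ℝ] ℝ := fun z => Sum.elim (fun i => ψ i.1)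
    (fun ij => γ ij.2.1 • ψ ij.1.1 - γ ij.1.1 • ψ ij.2.1) z
  let β : ι → ℝ := fun z => Sum.elim (fun i => b i.1)
    (fun ij => γ ij.2.1 * b ij.1.1 - γ ij.1.1 * b ij.2.1) z
  have key : {x : E | ∃ t : ℝ, (x, t) ∈ ⋂ i, {z | φ i z ≤ b i}} =
      ⋂ z, {x | Φ z x ≤ β z} := by
    ext x
    simp only [Set.mem_setOf_eq, Set.mem_iInter]
    constructor
    · rintro ⟨t, ht⟩ z
      have H : ∀ i, ψ i x + t * γ i ≤ b i := by
        intro i; have hh := ht i; rw [hdec] at hh; exact hh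
      rcases z with i | ⟨i, j⟩
      · have := H i.1; simp only [i.2] at this
        simpa [Φ, β] using by linarith
      · have hi := H i.1; have hj := H j.1
        have h1 : γ i.1 < 0 := i.2
        have h2 : 0 < γ j.1 := j.2
        simp only [Φ, β, Sum.elim_inr, LinearMap.sub_apply, LinearMap.smul_apply,
          smul_eq_mul]
        nlinarith [mul_le_mul_of_nonneg_left hi (le_of_lt h2),
          mul_le_mul_of_nonpos_left hj (le_of_lt h1)]
    · intro H
      have Hz : ∀ i : {i // γ i = 0}, ψ i.1 x ≤ b i.1 := fun i => H (Sum.inl i)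
      have Hc : ∀ (i : {i // γ i < 0}) (j : {j // 0 < γ j}),
          γ j.1 * ψ i.1 x - γ i.1 * ψ j.1 x ≤ γ j.1 * b i.1 - γ i.1 * b j.1 := by
        intro i j
        have := H (Sum.inr (i, j))
        simpa [Φ, β] using this
      set l : {i // γ i < 0} → ℝ := fun i => (b i.1 - ψ i.1 x) / γ i.1 with hl
      set u : {j // 0 < γ j} → ℝ := fun j => (b j.1 - ψ j.1 x) / γ j.1 with hu
      have hlu : ∀ i j, l i ≤ u j := by
        intro i j
        rw [hl, hu]
        rw [div_le_iff_of_neg i.2, div_mul_eq_mul_div, div_le_iff₀ j.2]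
        have := Hc i j
        nlinarith [Hc i j]
      -- find t between all lowers and uppers
      have hex : ∃ t : ℝ, (∀ i : {i // γ i < 0}, l i ≤ t) ∧
          (∀ j : {j // 0 < γ j}, t ≤ u j) := by
        by_cases hP : Nonempty {j // 0 < γ j}
        · haveI := hP
          refine ⟨Finset.univ.inf' Finset.univ_nonempty u, ?_, ?_⟩
          · intro i
            exact Finset.le_inf' _ _ (fun j _ => hlu i j)
          · intro j
            exact Finset.inf'_le _ (Finset.mem_univ j)
        · by_cases hN : Nonempty {i // γ i < 0}
          · haveI := hN
            refine ⟨Finset.univ.sup' Finset.univ_nonempty l, ?_, ?_⟩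
            · intro i
              exact Finset.le_sup' _ (Finset.mem_univ i)
            · intro j; exact absurd ⟨j⟩ hP
          · exact ⟨0, fun i => absurd ⟨i⟩ hN, fun j => absurd ⟨j⟩ hP⟩
      obtain ⟨t, hlo, hhi⟩ := hex
      refine ⟨t, ?_⟩
      intro i
      rw [hdec]
      rcases lt_trichotomy (γ i) 0 with hg | hg | hg
      · have := hlo ⟨i, hg⟩
        rw [hl, div_le_iff_of_neg hg] at this
        linarith
      · simpa [hg] using Hz ⟨i, hg⟩
      · have := hhi ⟨i, hg⟩
        rw [hu, le_div_iff₀ hg] at this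
        linarith
  rw [key]
  exact isPolyhedron_of_fintype _ _

lemma poly_rclosed {S : Set (E × ℝ)} (hS : IsPolyhedron S) {x : E} {r : ℝ}
    (h : ∀ ε > (0:ℝ), (x, r + ε) ∈ S) : (x, r) ∈ S := by
  obtain ⟨k, φ, b, rfl⟩ := hS
  rw [Set.mem_iInter]
  intro i
  set γ := φ i (0, 1) with hγ
  have key : ∀ ε > (0:ℝ), φ i (x, 0) + (r + ε) * γ ≤ b i := by
    intro ε hε
    have := Set.mem_iInter.mp (h ε hε) i
    rw [Set.mem_setOf_eq, linmap_decomp] at this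
    exact this
  show φ i (x, r) ≤ b i
  rw [linmap_decomp, ← hγ]
  by_contra hc
  push_neg at hc
  rcases le_or_gt 0 γ with hg | hg
  · have := key 1 one_pos; nlinarith
  · set ε := (φ i (x,0) + r * γ - b i) / (-2 * γ) with hε
    have hεpos : 0 < ε := div_pos (by linarith) (by linarith)
    have h2 := key ε hεpos
    have h3 : ε * γ = -(φ i (x,0) + r * γ - b i)/2 := by
      have hγ0 : γ ≠ 0 := ne_of_lt hg
      rw [hε]; field_simp
    nlinarith

lemma proj_pi : ∀ {k : ℕ} {S : Set (E × (Fin k → ℝ))}, IsPolyhedron S →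
    IsPolyhedron {x | ∃ v, (x, v) ∈ S} := by
  intro k
  induction k with
  | zero =>
    intro S hS
    have : {x | ∃ v, (x, v) ∈ S} = (LinearMap.prod LinearMap.id 0 :
        E →ₗ[ℝ] E × (Fin 0 → ℝ)) ⁻¹' S := by
      ext x
      simp only [Set.mem_setOf_eq, Set.mem_preimage, LinearMap.prod_apply,
        LinearMap.id_coe, id_eq, Pi.zero_apply]
      constructor
      · rintro ⟨v, hv⟩
        obtain rfl : v = 0 := Subsingleton.elim _ _
        exact hv
      · intro hx; exact ⟨_, hx⟩
    rw [this]
    exact hS.preimage _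
  | succ k ih =>
    intro S hS
    let L : (E × (Fin k → ℝ)) × ℝ →ₗ[ℝ] E × (Fin (k+1) → ℝ) :=
      LinearMap.prod ((LinearMap.fst ℝ E (Fin k → ℝ)).comp (LinearMap.fst ℝ _ ℝ))
        (LinearMap.pi (fun i => Fin.cases (LinearMap.snd ℝ (E × (Fin k → ℝ)) ℝ)
          (fun j => (LinearMap.proj j).comp
            ((LinearMap.snd ℝ E (Fin k → ℝ)).comp (LinearMap.fst ℝ _ ℝ))) i))
    have hL : ∀ (x : E) (w : Fin k → ℝ) (t : ℝ), L ((x, w), t) = (x, Fin.cons t w) := by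
      intro x w t
      refine Prod.ext rfl ?_
      funext i
      refine Fin.cases ?_ (fun j => ?_) i <;>
        simp [L, LinearMap.pi_apply]
    have key : {x | ∃ v, (x, v) ∈ S} =
        {x | ∃ w : Fin k → ℝ, (x, w) ∈ {y : E × (Fin k → ℝ) | ∃ t : ℝ, (y, t) ∈ L ⁻¹' S}} := by
      ext x
      simp only [Set.mem_setOf_eq, Set.mem_preimage]
      constructor
      · rintro ⟨v, hv⟩
        refine ⟨Fin.tail v, v 0, ?_⟩
        rw [hL, Fin.cons_self_tail]; exact hv
      · rintro ⟨w, t, hwt⟩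
        rw [hL] at hwt
        exact ⟨_, hwt⟩
    rw [key]
    exact ih (fourier_motzkin (hS.preimage L))

lemma ereal_coe_add_le_coe (s r : ℝ) (X : EReal) (hX : X ≠ ⊥) :
    (s : EReal) + X ≤ (r : EReal) ↔ X ≤ ((r - s : ℝ) : EReal) := by
  induction X using EReal.rec with
  | bot => simp at hX
  | top =>
    rw [EReal.coe_add_top]
    constructor
    · intro hle; exact ((EReal.coe_lt_top r).not_ge hle).elim
    · intro hle; exact ((EReal.coe_lt_top (r - s)).not_ge hle).elim
  | coe s' =>
    rw [← EReal.coe_add, EReal.coe_le_coe_iff, EReal.coe_le_coe_iff]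
    constructor <;> intro <;> linarith

lemma ereal_pos_mul_le_coe (p r : ℝ) (hp : 0 < p) (X : EReal) :
    (p : EReal) * X ≤ (r : EReal) ↔ X ≤ ((r / p : ℝ) : EReal) := by
  induction X using EReal.rec with
  | bot =>
    rw [EReal.mul_bot_of_pos (EReal.coe_pos.mpr hp)]
    simp
  | top =>
    rw [EReal.mul_top_of_pos (EReal.coe_pos.mpr hp)]
    constructor
    · intro hle; exact ((EReal.coe_lt_top r).not_ge hle).elim
    · intro hle; exact ((EReal.coe_lt_top (r / p)).not_ge hle).elim
  | coe s =>
    rw [← EReal.coe_mul, EReal.coe_le_coe_iff, EReal.coe_le_coe_iff,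
      le_div_iff₀ hp, mul_comm]

lemma epi_add_poly {f g : E → EReal} (hfb : ∀ x, f x ≠ ⊥) (hgb : ∀ x, g x ≠ ⊥)
    (hf : IsPolyhedron {q : E × ℝ | f q.1 ≤ (q.2 : EReal)})
    (hg : IsPolyhedron {q : E × ℝ | g q.1 ≤ (q.2 : EReal)}) :
    IsPolyhedron {q : E × ℝ | f q.1 + g q.1 ≤ (q.2 : EReal)} := by
  let L1 : (E × ℝ) × ℝ →ₗ[ℝ] E × ℝ :=
    LinearMap.prod ((LinearMap.fst ℝ E ℝ).comp (LinearMap.fst ℝ (E × ℝ) ℝ))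
      (LinearMap.snd ℝ (E × ℝ) ℝ)
  let L2 : (E × ℝ) × ℝ →ₗ[ℝ] E × ℝ :=
    LinearMap.prod ((LinearMap.fst ℝ E ℝ).comp (LinearMap.fst ℝ (E × ℝ) ℝ))
      ((LinearMap.snd ℝ E ℝ).comp (LinearMap.fst ℝ (E × ℝ) ℝ) - LinearMap.snd ℝ (E × ℝ) ℝ)
  have key : {q : E × ℝ | f q.1 + g q.1 ≤ (q.2 : EReal)} =
      {q : E × ℝ | ∃ t : ℝ, (q, t) ∈
        (L1 ⁻¹' {q : E × ℝ | f q.1 ≤ (q.2 : EReal)}) ∩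
        (L2 ⁻¹' {q : E × ℝ | g q.1 ≤ (q.2 : EReal)})} := by
    ext ⟨x, r⟩
    simp only [Set.mem_setOf_eq, Set.mem_inter_iff, Set.mem_preimage, L1, L2,
      LinearMap.prod_apply, LinearMap.comp_apply, LinearMap.fst_apply,
      LinearMap.snd_apply, LinearMap.sub_apply, Function.prod_apply]
    constructor
    · intro hle
      have hfx_ne_top : f x ≠ ⊤ := by
        intro hT
        rw [hT, EReal.top_add_of_ne_bot (hgb x)] at hle
        exact (EReal.coe_lt_top r).not_ge hle
      have hs : ((f x).toReal : EReal) = f x := EReal.coe_toReal hfx_ne_top (hfb x)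
      rw [← hs, ereal_coe_add_le_coe _ _ _ (hgb x)] at hle
      exact ⟨(f x).toReal, le_of_eq hs.symm, hle⟩
    · rintro ⟨t, h1, h2⟩
      calc f x + g x ≤ (t : EReal) + ((r - t : ℝ) : EReal) := add_le_add h1 h2
        _ = ((t + (r - t) : ℝ) : EReal) := (EReal.coe_add _ _).symm
        _ = (r : EReal) := by norm_num
  rw [key]
  exact fourier_motzkin ((hf.preimage L1).inter (hg.preimage L2))

lemma epi_smul_poly {g : E → EReal} (p : ℝ) (hp : 0 < p)
    (hg : IsPolyhedron {q : E × ℝ | g q.1 ≤ (q.2 : EReal)}) :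
    IsPolyhedron {q : E × ℝ | (p : EReal) * g q.1 ≤ (q.2 : EReal)} := by
  let L : E × ℝ →ₗ[ℝ] E × ℝ :=
    LinearMap.prod (LinearMap.fst ℝ E ℝ) ((1/p) • LinearMap.snd ℝ E ℝ)
  have key : {q : E × ℝ | (p : EReal) * g q.1 ≤ (q.2 : EReal)} =
      L ⁻¹' {q : E × ℝ | g q.1 ≤ (q.2 : EReal)} := by
    ext ⟨x, r⟩
    simp only [Set.mem_setOf_eq, Set.mem_preimage, L, LinearMap.prod_apply,
      LinearMap.fst_apply, LinearMap.smul_apply, LinearMap.snd_apply, Function.prod_apply,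
      smul_eq_mul]
    rw [ereal_pos_mul_le_coe p r hp]
    rw [show (1/p) * r = r / p by ring]
  rw [key]
  exact hg.preimage L


end Aux

section Aux2
lemma epiF_poly {E U : Type*}
    [NormedAddCommGroup E] [InnerProductSpace ℝ E]
    [NormedAddCommGroup U] [InnerProductSpace ℝ U]
    {I : Type*} [Fintype I] [Nonempty I]
    (a : I → E × U) (d : I → ℝ)
    (P : Set (E × U)) (hP : IsPolyhedron P)
    (c : E × U → EReal)
    (hcin : ∀ q ∈ P, c q = ((Finset.univ.sup' Finset.univ_nonempty
      (fun i : I => ⟪(a i).1, q.1⟫ + ⟪(a i).2, q.2⟫ + d i) : ℝ) : EReal))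
    (hcout : ∀ q ∉ P, c q = (⊤ : EReal))
    (zmap : E × U →ₗ[ℝ] E)
    (φ : E → EReal) (hφbot : ∀ z, φ z ≠ ⊥)
    (hφne : {q : E × ℝ | φ q.1 ≤ (q.2 : EReal)}.Nonempty)
    (hφpoly : IsPolyhedron {q : E × ℝ | φ q.1 ≤ (q.2 : EReal)}) :
    IsPolyhedron {q : (E × U) × ℝ | c q.1 + φ (zmap q.1) ≤ (q.2 : EReal)} := by
  classical
  obtain ⟨K, ψ, β, hepi⟩ := hφpoly
  set γ : Fin K → ℝ := fun j => ψ j (0, 1) with hγdef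
  -- each γ j is ≤ 0 since the epigraph is upward closed and nonempty
  obtain ⟨⟨z₀, s₀⟩, hz₀⟩ := hφne
  have hup : ∀ s ≥ s₀, ∀ j, ψ j (z₀, 0) + s * γ j ≤ β j := by
    intro s hs j
    have hmem : (z₀, s) ∈ {q : E × ℝ | φ q.1 ≤ (q.2 : EReal)} := by
      exact le_trans (show φ z₀ ≤ (s₀ : EReal) from hz₀) (EReal.coe_le_coe_iff.mpr hs)
    rw [hepi, Set.mem_iInter] at hmem
    have := hmem j
    rwa [Set.mem_setOf_eq, linmap_decomp] at this
  have hγ : ∀ j, γ j ≤ 0 := by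
    intro j
    by_contra hpos
    push_neg at hpos
    set s := max s₀ ((β j - ψ j (z₀, 0) + 1) / γ j) with hs
    have h1 := hup s (le_max_left _ _) j
    have h2 : (β j - ψ j (z₀, 0) + 1) / γ j ≤ s := le_max_right _ _
    rw [div_le_iff₀ hpos] at h2
    nlinarith
  -- membership in the epigraph of φ, coordinatized
  have hmemiff : ∀ (z : E) (s : ℝ), φ z ≤ (s : EReal) ↔
      ∀ j, ψ j (z, 0) + s * γ j ≤ β j := by
    intro z s
    have : φ z ≤ (s : EReal) ↔ (z, s) ∈ {q : E × ℝ | φ q.1 ≤ (q.2 : EReal)} := Iff.rfl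
    rw [this, hepi, Set.mem_iInter]
    apply forall_congr'
    intro j
    rw [Set.mem_setOf_eq, linmap_decomp]
  -- linear parts of the affine cost pieces
  set ℓlin : I → E × U →ₗ[ℝ] ℝ := fun i =>
    (innerSL ℝ (a i).1).toLinearMap.comp (LinearMap.fst ℝ E U) +
    (innerSL ℝ (a i).2).toLinearMap.comp (LinearMap.snd ℝ E U) with hℓdef
  have hℓ : ∀ i (q : E × U), ℓlin i q = ⟪(a i).1, q.1⟫ + ⟪(a i).2, q.2⟫ := by
    intro i q; simp [hℓdef]
  set ψ0 : Fin K → E →ₗ[ℝ] ℝ := fun j => (ψ j).comp (LinearMap.inl ℝ E ℝ) with hψ0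
  set fstD := LinearMap.fst ℝ (E × U) ℝ with hfstD
  set Λ : Fin K × I → (E × U) × ℝ →ₗ[ℝ] ℝ := fun ji =>
    ((ψ0 ji.1).comp (zmap.comp fstD)) + γ ji.1 • (LinearMap.snd ℝ (E × U) ℝ)
      - γ ji.1 • ((ℓlin ji.2).comp fstD) with hΛ
  set Β : Fin K × I → ℝ := fun ji => β ji.1 + γ ji.1 * d ji.2 with hΒ
  have hΛval : ∀ j i (q : E × U) (r : ℝ),
      Λ (j, i) (q, r) = ψ j (zmap q, 0) + γ j * r - γ j * ℓlin i q := by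
    intro j i q r
    simp [hΛ, hψ0, hfstD]
  have key : {q : (E × U) × ℝ | c q.1 + φ (zmap q.1) ≤ (q.2 : EReal)} =
      (fstD ⁻¹' P) ∩ ⋂ ji, {q | Λ ji q ≤ Β ji} := by
    ext ⟨q, r⟩
    by_cases hqP : q ∈ P
    · set M := Finset.univ.sup' Finset.univ_nonempty
        (fun i : I => ⟪(a i).1, q.1⟫ + ⟪(a i).2, q.2⟫ + d i) with hM
      have hMl : M = Finset.univ.sup' Finset.univ_nonempty
          (fun i : I => ℓlin i q + d i) := by
        rw [hM]; exact Finset.sup'_congr _ rfl (fun i _ => by rw [hℓ])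
      simp only [Set.mem_setOf_eq, Set.mem_inter_iff, Set.mem_preimage,
        Set.mem_iInter, hfstD, LinearMap.fst_apply]
      rw [hcin q hqP, ← hM, ereal_coe_add_le_coe _ _ _ (hφbot _),
        hmemiff (zmap q) (r - M)]
      constructor
      · intro H
        refine ⟨hqP, ?_⟩
        rintro ⟨j, i⟩
        rw [hΛval]
        have h1 := H j
        have h2 : ℓlin i q + d i ≤ M := by
          rw [hMl]
          exact Finset.le_sup' (fun i => ℓlin i q + d i) (Finset.mem_univ i)
        have h3 : (-γ j) * (ℓlin i q + d i) ≤ (-γ j) * M :=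
          mul_le_mul_of_nonneg_left h2 (by linarith [hγ j])
        simp only [hΒ]
        nlinarith [h1, h3]
      · rintro ⟨-, H⟩ j
        rcases eq_or_lt_of_le (hγ j) with hj0 | hjneg
        · have hth := H (j, Classical.arbitrary I)
          rw [hΛval] at hth
          simp only [hΒ] at hth
          rw [hj0] at hth ⊢
          simp only [zero_mul, mul_zero, sub_zero, add_zero] at hth ⊢
          linarith
        · obtain ⟨i, -, hi⟩ := Finset.exists_mem_eq_sup' (Finset.univ_nonempty)
            (fun i : I => ℓlin i q + d i)
          have hth := H (j, i)
          rw [hΛval] at hth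
          simp only [hΒ] at hth
          rw [hMl, hi]
          nlinarith [hth]
    · simp only [Set.mem_setOf_eq, Set.mem_inter_iff, Set.mem_preimage,
        hfstD, LinearMap.fst_apply]
      rw [hcout q hqP, EReal.top_add_of_ne_bot (hφbot _)]
      constructor
      · intro hle; exact ((EReal.coe_lt_top r).not_ge hle).elim
      · rintro ⟨hq, -⟩; exact absurd hq hqP
  rw [key]
  exact (hP.preimage fstD).inter (isPolyhedron_of_fintype Λ Β)

lemma ereal_pos_mul_ne_bot {p : ℝ} (hp : 0 < p) {X : EReal} (hX : X ≠ ⊥) :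
    (p : EReal) * X ≠ ⊥ := by
  induction X using EReal.rec with
  | bot => exact absurd rfl hX
  | top => rw [EReal.mul_top_of_pos (EReal.coe_pos.mpr hp)]; simp
  | coe s => rw [← EReal.coe_mul]; exact EReal.coe_ne_bot _

lemma epi_inf_poly {n m : ℕ} (F : EuclideanSpace ℝ (Fin n) → EuclideanSpace ℝ (Fin m) → EReal)
    (hS : IsPolyhedron {q : (EuclideanSpace ℝ (Fin n) × EuclideanSpace ℝ (Fin m)) × ℝ |
      F q.1.1 q.1.2 ≤ (q.2 : EReal)}) :
    IsPolyhedron {q : EuclideanSpace ℝ (Fin n) × ℝ | (⨅ u, F q.1 u) ≤ (q.2 : EReal)} := by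
  let E := EuclideanSpace ℝ (Fin n)
  let U := EuclideanSpace ℝ (Fin m)
  let eU : (Fin m → ℝ) ≃ₗ[ℝ] U := (WithLp.linearEquiv 2 ℝ (Fin m → ℝ)).symm
  let Lr : (E × ℝ) × (Fin m → ℝ) →ₗ[ℝ] (E × U) × ℝ :=
    LinearMap.prod
      (LinearMap.prod ((LinearMap.fst ℝ E ℝ).comp (LinearMap.fst ℝ (E × ℝ) (Fin m → ℝ)))
        (eU.toLinearMap.comp (LinearMap.snd ℝ (E × ℝ) (Fin m → ℝ))))
      ((LinearMap.snd ℝ E ℝ).comp (LinearMap.fst ℝ (E × ℝ) (Fin m → ℝ)))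
  set Q : Set (E × ℝ) := {y : E × ℝ | ∃ v : Fin m → ℝ, (y, v) ∈ Lr ⁻¹'
    {q : (E × U) × ℝ | F q.1.1 q.1.2 ≤ (q.2 : EReal)}} with hQ
  have hQpoly : IsPolyhedron Q := proj_pi (hS.preimage Lr)
  have hQchar : ∀ (x : E) (r : ℝ), (x, r) ∈ Q ↔ ∃ u : U, F x u ≤ (r : EReal) := by
    intro x r
    rw [hQ]
    simp only [Set.mem_setOf_eq, Set.mem_preimage, Lr, LinearMap.prod_apply,
      LinearMap.comp_apply, LinearMap.fst_apply, LinearMap.snd_apply, Function.prod_apply,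
      LinearEquiv.coe_coe]
    constructor
    · rintro ⟨v, hv⟩; exact ⟨eU v, hv⟩
    · rintro ⟨u, hu⟩
      refine ⟨eU.symm u, ?_⟩
      rw [eU.apply_symm_apply]
      exact hu
  have key : {q : E × ℝ | (⨅ u, F q.1 u) ≤ (q.2 : EReal)} = Q := by
    apply Set.Subset.antisymm
    · rintro ⟨x, r⟩ hg
      simp only [Set.mem_setOf_eq] at hg
      apply poly_rclosed hQpoly
      intro ε hε
      rw [hQchar]
      have hlt : (⨅ u, F x u) < ((r + ε : ℝ) : EReal) :=
        lt_of_le_of_lt hg (EReal.coe_lt_coe_iff.mpr (by linarith))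
      obtain ⟨u, hu⟩ := iInf_lt_iff.mp hlt
      exact ⟨u, hu.le⟩
    · rintro ⟨x, r⟩ hq
      rw [hQchar] at hq
      obtain ⟨u, hu⟩ := hq
      exact le_trans (iInf_le _ u) hu
  rw [key]
  exact hQpoly

end Aux2

/-- The average Bellman operator of a linear-polyhedral
problem preserves polyhedrality: with polyhedral costs `c^w`, linear dynamics
`(x,u) ↦ A_w x + B_w u` and a polyhedral function `φ`, the averaged function
`h(x) = ∑_w p_w inf_u ( c^w(x,u) + φ(A_w x + B_w u) )` is polyhedral, provided
the inner infima are `> −∞` everywhere and `h` is finite somewhere. -/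
theorem statement9 {n m : ℕ} (hn : 0 < n) (hm : 0 < m)
    (W : Type) [Fintype W] [Nonempty W]
    (p : W → ℝ) (hp : ∀ w, 0 < p w) (hpsum : ∑ w, p w = 1)
    (I : W → Type) [∀ w, Fintype (I w)] [∀ w, Nonempty (I w)]
    (a : ∀ w, I w → EuclideanSpace ℝ (Fin n) × EuclideanSpace ℝ (Fin m))
    (d : ∀ w, I w → ℝ)
    (P : W → Set (EuclideanSpace ℝ (Fin n) × EuclideanSpace ℝ (Fin m)))
    (hPne : ∀ w, (P w).Nonempty) (hPpoly : ∀ w, IsPolyhedron (P w))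
    (c : W → EuclideanSpace ℝ (Fin n) × EuclideanSpace ℝ (Fin m) → EReal)
    (hcin : ∀ w, ∀ q ∈ P w, c w q =
      ((Finset.univ.sup' Finset.univ_nonempty
        (fun i : I w => ⟪(a w i).1, q.1⟫ + ⟪(a w i).2, q.2⟫ + d w i) : ℝ) : EReal))
    (hcout : ∀ w, ∀ q ∉ P w, c w q = (⊤ : EReal))
    (A : W → EuclideanSpace ℝ (Fin n) →ₗ[ℝ] EuclideanSpace ℝ (Fin n))
    (B : W → EuclideanSpace ℝ (Fin m) →ₗ[ℝ] EuclideanSpace ℝ (Fin n))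
    (φ : EuclideanSpace ℝ (Fin n) → EReal)
    (hφbot : ∀ z, φ z ≠ ⊥) (hφ : IsPolyhedralFn φ)
    (h : EuclideanSpace ℝ (Fin n) → EReal)
    (hh : ∀ x, h x = ∑ w, (p w : EReal) *
      (⨅ u, (c w (x, u) + φ (A w x + B w u))))
    (hbdd : ∀ x, ∀ w, (⨅ u, (c w (x, u) + φ (A w x + B w u))) ≠ (⊥ : EReal))
    (hfin : ∃ x₀, h x₀ ≠ (⊤ : EReal)) :
    IsPolyhedralFn h := by
  classical
  let g : W → EuclideanSpace ℝ (Fin n) → EReal :=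
    fun w x => ⨅ u, (c w (x, u) + φ (A w x + B w u))
  have hgbot : ∀ w x, g w x ≠ ⊥ := fun w x => hbdd x w
  have hgepi : ∀ w, IsPolyhedron
      {q : EuclideanSpace ℝ (Fin n) × ℝ | g w q.1 ≤ (q.2 : EReal)} := by
    intro w
    let zmap : EuclideanSpace ℝ (Fin n) × EuclideanSpace ℝ (Fin m) →ₗ[ℝ]
        EuclideanSpace ℝ (Fin n) :=
      (A w).comp (LinearMap.fst ℝ _ _) + (B w).comp (LinearMap.snd ℝ _ _)
    have hz : ∀ q : EuclideanSpace ℝ (Fin n) × EuclideanSpace ℝ (Fin m),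
        zmap q = A w q.1 + B w q.2 := by
      intro q; simp [zmap]
    have hzS := epiF_poly (a w) (d w) (P w) (hPpoly w) (c w) (hcin w) (hcout w)
      zmap φ hφbot hφ.1 hφ.2
    have hset : {q : (EuclideanSpace ℝ (Fin n) × EuclideanSpace ℝ (Fin m)) × ℝ |
        c w q.1 + φ (zmap q.1) ≤ (q.2 : EReal)} =
        {q : (EuclideanSpace ℝ (Fin n) × EuclideanSpace ℝ (Fin m)) × ℝ |
          (fun x u => c w (x, u) + φ (A w x + B w u)) q.1.1 q.1.2 ≤ (q.2 : EReal)} := by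
      ext q
      simp only [Set.mem_setOf_eq, hz]
    rw [hset] at hzS
    exact epi_inf_poly (fun x u => c w (x, u) + φ (A w x + B w u)) hzS
  let G : W → EuclideanSpace ℝ (Fin n) → EReal := fun w x => (p w : EReal) * g w x
  have hGepi : ∀ w, IsPolyhedron
      {q : EuclideanSpace ℝ (Fin n) × ℝ | G w q.1 ≤ (q.2 : EReal)} :=
    fun w => epi_smul_poly (p w) (hp w) (hgepi w)
  have hGbot : ∀ w x, G w x ≠ ⊥ :=
    fun w x => ereal_pos_mul_ne_bot (hp w) (hgbot w x)
  have hsum : ∀ s : Finset W,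
      IsPolyhedron {q : EuclideanSpace ℝ (Fin n) × ℝ |
        (∑ w ∈ s, G w q.1) ≤ (q.2 : EReal)} ∧
      ∀ x, (∑ w ∈ s, G w x) ≠ ⊥ := by
    intro s
    induction s using Finset.induction_on with
    | empty =>
      constructor
      · refine ⟨1, fun _ => -(LinearMap.snd ℝ (EuclideanSpace ℝ (Fin n)) ℝ),
          fun _ => 0, ?_⟩
        ext q
        simp only [Finset.sum_empty, Set.mem_setOf_eq, Set.mem_iInter,
          LinearMap.neg_apply, LinearMap.snd_apply]
        constructor
        · intro hq i
          have h0 : (0:ℝ) ≤ q.2 := by exact_mod_cast hq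
          linarith
        · intro hq
          have h0 := hq 0
          have h1 : (0:ℝ) ≤ q.2 := by linarith
          exact_mod_cast h1
      · intro x; simp
    | insert w0 s0 hni ih =>
      constructor
      · have hstep := epi_add_poly (f := G w0) (g := fun x => ∑ w ∈ s0, G w x)
          (fun x => hGbot w0 x) (fun x => ih.2 x) (hGepi w0) ih.1
        have hset : {q : EuclideanSpace ℝ (Fin n) × ℝ |
            G w0 q.1 + (∑ w ∈ s0, G w q.1) ≤ (q.2 : EReal)} =
            {q : EuclideanSpace ℝ (Fin n) × ℝ |
              (∑ w ∈ insert w0 s0, G w q.1) ≤ (q.2 : EReal)} := by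
          ext q
          rw [Set.mem_setOf_eq, Set.mem_setOf_eq, Finset.sum_insert hni]
        rw [← hset]
        exact hstep
      · intro x
        rw [Finset.sum_insert hni]
        intro hb
        rcases EReal.add_eq_bot_iff.mp hb with hb' | hb'
        · exact hGbot w0 x hb'
        · exact ih.2 x hb'
  have hepi_eq : {q : EuclideanSpace ℝ (Fin n) × ℝ | h q.1 ≤ (q.2 : EReal)} =
      {q : EuclideanSpace ℝ (Fin n) × ℝ | (∑ w, G w q.1) ≤ (q.2 : EReal)} := by
    ext q
    rw [Set.mem_setOf_eq, Set.mem_setOf_eq, hh]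
  constructor
  · obtain ⟨x₀, hx₀⟩ := hfin
    have hb : h x₀ ≠ ⊥ := by
      rw [hh]
      exact (hsum Finset.univ).2 x₀
    refine ⟨(x₀, (h x₀).toReal), ?_⟩
    show h x₀ ≤ ((h x₀).toReal : EReal)
    rw [EReal.coe_toReal hx₀ hb]
  · rw [hepi_eq]
    exact (hsum Finset.univ).1
end

section
/- Let V : ℝ^𝕏 → ℝ be 𝒱-Lipschitz with respect to the ℓ1 norm on the nonnegative orthant ℝ₊^𝕏, and suppose ‖L^u‖_∞ = max_{x∈𝕏}|L^u(x)| ≤ ℒ for every u ∈ 𝕌. Then the function c ↦ min_{u∈𝕌} ( ⟨c, L^u⟩ + ∑_{o∈𝕆} V(cM^{u,o}) ) is (ℒ + 𝒱)-Lipschitz with respect to the ℓ1 norm on ℝ₊^𝕏. -/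
lemma abs_ciInf_sub_ciInf {ι : Type} [Fintype ι] [Nonempty ι] (f g : ι → ℝ) (ε : ℝ)
    (h : ∀ i, |f i - g i| ≤ ε) : |iInf f - iInf g| ≤ ε := by
  have hbf : BddBelow (Set.range f) := (Set.finite_range f).bddBelow
  have hbg : BddBelow (Set.range g) := (Set.finite_range g).bddBelow
  obtain ⟨i, hi⟩ := exists_eq_ciInf_of_finite (f := f)
  obtain ⟨j, hj⟩ := exists_eq_ciInf_of_finite (f := g)
  rw [abs_sub_le_iff]
  constructor
  · have h1 : iInf f ≤ f j := ciInf_le hbf j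
    have := (abs_sub_le_iff.mp (h j)).1
    linarith
  · have h1 : iInf g ≤ g i := ciInf_le hbg i
    have := (abs_sub_le_iff.mp (h i)).2
    linarith

/-- The one-step POMDP Bellman operator
`c ↦ min_u ( ⟨c, L^u⟩ + ∑_o V(cM^{u,o}) )` maps a function `V` that is
`𝒱`-Lipschitz for the `ℓ1` norm on the nonnegative orthant to an
`(ℒ + 𝒱)`-Lipschitz function on the nonnegative orthant, provided the matrices
`M^{u,o}` are nonnegative and sub-stochastic
(`∑_o ∑_{x'} M^{u,o}(x,x') = 1`) and `‖L^u‖_∞ ≤ ℒ`. -/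
theorem statement12 (𝕏 𝕌 𝕆 : Type)
    [Fintype 𝕏] [Nonempty 𝕏] [Fintype 𝕌] [Nonempty 𝕌] [Fintype 𝕆] [Nonempty 𝕆]
    (M : 𝕌 → 𝕆 → 𝕏 → 𝕏 → ℝ)
    (hMnn : ∀ u o x x', 0 ≤ M u o x x')
    (hMsub : ∀ u x, ∑ o, ∑ x', M u o x x' = 1)
    (L : 𝕌 → 𝕏 → ℝ) (ℒ : ℝ) (hL : ∀ u x, |L u x| ≤ ℒ)
    (V : (𝕏 → ℝ) → ℝ) (𝒱 : ℝ)
    (hV : ∀ c c' : 𝕏 → ℝ, (∀ x, 0 ≤ c x) → (∀ x, 0 ≤ c' x) →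
      |V c - V c'| ≤ 𝒱 * ∑ x, |c x - c' x|) :
    ∀ c c' : 𝕏 → ℝ, (∀ x, 0 ≤ c x) → (∀ x, 0 ≤ c' x) →
      |(⨅ u, ((∑ x, c x * L u x) + ∑ o, V fun x' => ∑ x, c x * M u o x x')) -
        (⨅ u, ((∑ x, c' x * L u x) + ∑ o, V fun x' => ∑ x, c' x * M u o x x'))| ≤
      (ℒ + 𝒱) * ∑ x, |c x - c' x| := by
  intro c c' hc hc'
  apply abs_ciInf_sub_ciInf
  intro u
  have key1 : |(∑ x, c x * L u x) - ∑ x, c' x * L u x| ≤ ℒ * ∑ x, |c x - c' x| := by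
    rw [← Finset.sum_sub_distrib, Finset.mul_sum]
    refine (Finset.abs_sum_le_sum_abs _ _).trans (Finset.sum_le_sum fun x _ => ?_)
    rw [← sub_mul, abs_mul, mul_comm]
    exact mul_le_mul_of_nonneg_right (hL u x) (abs_nonneg _)
  have key2 : |(∑ o, V fun x' => ∑ x, c x * M u o x x') -
      ∑ o, V fun x' => ∑ x, c' x * M u o x x'| ≤ 𝒱 * ∑ x, |c x - c' x| := by
    rw [← Finset.sum_sub_distrib]
    refine (Finset.abs_sum_le_sum_abs _ _).trans ?_
    have step : ∀ o : 𝕆, |(V fun x' => ∑ x, c x * M u o x x') -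
        V fun x' => ∑ x, c' x * M u o x x'| ≤ 𝒱 * ∑ x', |∑ x, (c x - c' x) * M u o x x'| := by
      intro o
      have := hV (fun x' => ∑ x, c x * M u o x x') (fun x' => ∑ x, c' x * M u o x x')
        (fun x' => Finset.sum_nonneg fun x _ => mul_nonneg (hc x) (hMnn u o x x'))
        (fun x' => Finset.sum_nonneg fun x _ => mul_nonneg (hc' x) (hMnn u o x x'))
      simpa [← Finset.sum_sub_distrib, sub_mul] using this
    refine (Finset.sum_le_sum fun o _ => step o).trans ?_
    have step2 : ∀ o x', |∑ x, (c x - c' x) * M u o x x'| ≤ ∑ x, |c x - c' x| * M u o x x' := by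
      intro o x'
      refine (Finset.abs_sum_le_sum_abs _ _).trans (Finset.sum_le_sum fun x _ => ?_)
      rw [abs_mul, abs_of_nonneg (hMnn u o x x')]
    calc ∑ o, 𝒱 * ∑ x', |∑ x, (c x - c' x) * M u o x x'|
        ≤ ∑ o, 𝒱 * ∑ x', ∑ x, |c x - c' x| * M u o x x' := by
          have hVnn : 0 ≤ 𝒱 := by
            have h1 := hV (fun _ => 1) (fun _ => 0) (fun _ => zero_le_one) (fun _ => le_refl 0)
            simp at h1
            have hcard : (0:ℝ) < (Fintype.card 𝕏 : ℝ) := by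
              exact_mod_cast Fintype.card_pos (α := 𝕏)
            nlinarith [abs_nonneg ((V fun _ => (1:ℝ)) - V fun _ => (0:ℝ)), h1, hcard]
          refine Finset.sum_le_sum fun o _ => ?_
          exact mul_le_mul_of_nonneg_left (Finset.sum_le_sum fun x' _ => step2 o x') hVnn
      _ = 𝒱 * ∑ x, |c x - c' x| := by
          rw [← Finset.mul_sum]
          congr 1
          calc ∑ o, ∑ x', ∑ x, |c x - c' x| * M u o x x'
              = ∑ o, ∑ x, ∑ x', |c x - c' x| * M u o x x' :=
                Finset.sum_congr rfl (fun o _ => Finset.sum_comm)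
            _ = ∑ x, ∑ o, ∑ x', |c x - c' x| * M u o x x' := Finset.sum_comm
            _ = ∑ x, |c x - c' x| * ∑ o, ∑ x', M u o x x' := by
                refine Finset.sum_congr rfl fun x _ => ?_
                simp [Finset.mul_sum]
            _ = ∑ x, |c x - c' x| := by simp [hMsub]
  calc |_| ≤ |(∑ x, c x * L u x) - ∑ x, c' x * L u x| +
      |(∑ o, V fun x' => ∑ x, c x * M u o x x') - ∑ o, V fun x' => ∑ x, c' x * M u o x x'| := by
        have : ((∑ x, c x * L u x) + ∑ o, V fun x' => ∑ x, c x * M u o x x') -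
            ((∑ x, c' x * L u x) + ∑ o, V fun x' => ∑ x, c' x * M u o x x') =
            ((∑ x, c x * L u x) - ∑ x, c' x * L u x) +
            ((∑ o, V fun x' => ∑ x, c x * M u o x x') - ∑ o, V fun x' => ∑ x, c' x * M u o x x') := by ring
        rw [this]; exact abs_add_le _ _
    _ ≤ (ℒ + 𝒱) * ∑ x, |c x - c' x| := by rw [add_mul]; exact add_le_add key1 key2
end

section
/- Define Ṽ_t : ℝ^𝕏 → ℝ by Ṽ_T(c) = ⟨c, K⟩ and Ṽ_t(c) = min_{u∈𝕌} ( ⟨c, L_t^u⟩ + ∑_{o∈𝕆} Ṽ_{t+1}(cM_t^{u,o}) ) for t < T. Suppose each M_t^{u,o} has nonnegative entries with ∑_{o∈𝕆} ∑_{x'∈𝕏} M_t^{u,o}(x,x') = 1 for every x ∈ 𝕏, that max_{x∈𝕏}|L_t^u(x)| ≤ ℒ for all t and u, and that max_{x∈𝕏}|K(x)| ≤ 𝒦. Then for every t ∈ {0,…,T}, Ṽ_t is (ℒ(T − t) + 𝒦)-Lipschitz with respect to the ℓ1 norm on the nonnegative orthant ℝ₊^𝕏. -/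
/-- The functions `Ṽ t` of the homogeneous POMDP Bellman
recursion are `(ℒ(T − t) + 𝒦)`-Lipschitz for the `ℓ1` norm on the nonnegative
orthant, when the matrices `M_t^{u,o}` are nonnegative and sub-stochastic,
`‖L_t^u‖_∞ ≤ ℒ` and `‖K‖_∞ ≤ 𝒦`. -/
theorem statement14 (𝕏 𝕌 𝕆 : Type)
    [Fintype 𝕏] [Nonempty 𝕏] [Fintype 𝕌] [Nonempty 𝕌] [Fintype 𝕆] [Nonempty 𝕆]
    (T : ℕ)
    (M : ℕ → 𝕌 → 𝕆 → 𝕏 → 𝕏 → ℝ)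
    (hMnn : ∀ t u o x x', 0 ≤ M t u o x x')
    (hMsub : ∀ t u x, ∑ o, ∑ x', M t u o x x' = 1)
    (L : ℕ → 𝕌 → 𝕏 → ℝ) (ℒ : ℝ) (hL : ∀ t u x, |L t u x| ≤ ℒ)
    (K : 𝕏 → ℝ) (𝒦 : ℝ) (hK : ∀ x, |K x| ≤ 𝒦)
    (V : ℕ → (𝕏 → ℝ) → ℝ)
    (hVT : ∀ c, V T c = ∑ x, c x * K x)
    (hVrec : ∀ t < T, ∀ c, V t c =
      ⨅ u, ((∑ x, c x * L t u x) +
        ∑ o, V (t + 1) fun x' => ∑ x, c x * M t u o x x')) :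
    ∀ t ≤ T, ∀ c c' : 𝕏 → ℝ, (∀ x, 0 ≤ c x) → (∀ x, 0 ≤ c' x) →
      |V t c - V t c'| ≤ (ℒ * ((T - t : ℕ) : ℝ) + 𝒦) * ∑ x, |c x - c' x| := by
  have hℒ0 : 0 ≤ ℒ := le_trans (abs_nonneg _) (hL 0 (Classical.arbitrary 𝕌) (Classical.arbitrary 𝕏))
  have h𝒦0 : 0 ≤ 𝒦 := le_trans (abs_nonneg _) (hK (Classical.arbitrary 𝕏))
  suffices h : ∀ k t, t + k = T → ∀ c c' : 𝕏 → ℝ, (∀ x, 0 ≤ c x) → (∀ x, 0 ≤ c' x) →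
      |V t c - V t c'| ≤ (ℒ * (k : ℝ) + 𝒦) * ∑ x, |c x - c' x| by
    intro t ht c c' hc hc'
    exact h (T - t) t (by omega) c c' hc hc'
  intro k
  induction k with
  | zero =>
    intro t ht c c' hc hc'
    have hTt : t = T := by omega
    subst hTt
    rw [hVT c, hVT c', ← Finset.sum_sub_distrib]
    simp only [Nat.cast_zero, mul_zero, zero_add]
    calc |∑ x, (c x * K x - c' x * K x)| ≤ ∑ x, |c x * K x - c' x * K x| :=
        Finset.abs_sum_le_sum_abs _ _
      _ ≤ ∑ x, 𝒦 * |c x - c' x| := by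
          apply Finset.sum_le_sum
          intro x _
          have he : c x * K x - c' x * K x = (c x - c' x) * K x := by ring
          rw [he, abs_mul, mul_comm]
          exact mul_le_mul_of_nonneg_right (hK x) (abs_nonneg _)
      _ = 𝒦 * ∑ x, |c x - c' x| := (Finset.mul_sum _ _ _).symm
  | succ k ih =>
    intro t ht c c' hc hc'
    have htT : t < T := by omega
    set S := ∑ x, |c x - c' x| with hSdef
    have hS0 : 0 ≤ S := Finset.sum_nonneg fun x _ => abs_nonneg _
    have hcoef : 0 ≤ ℒ * (k : ℝ) + 𝒦 := by positivity
    set f : 𝕌 → ℝ := fun u => (∑ x, c x * L t u x) +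
        ∑ o, V (t + 1) fun x' => ∑ x, c x * M t u o x x' with hfdef
    set g : 𝕌 → ℝ := fun u => (∑ x, c' x * L t u x) +
        ∑ o, V (t + 1) fun x' => ∑ x, c' x * M t u o x x' with hgdef
    have key : ∀ u, |f u - g u| ≤ ℒ * S + (ℒ * (k : ℝ) + 𝒦) * S := by
      intro u
      have h1 : |(∑ x, c x * L t u x) - ∑ x, c' x * L t u x| ≤ ℒ * S := by
        rw [← Finset.sum_sub_distrib]
        calc |∑ x, (c x * L t u x - c' x * L t u x)|
            ≤ ∑ x, |c x * L t u x - c' x * L t u x| := Finset.abs_sum_le_sum_abs _ _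
          _ ≤ ∑ x, ℒ * |c x - c' x| := by
              apply Finset.sum_le_sum
              intro x _
              have he : c x * L t u x - c' x * L t u x = (c x - c' x) * L t u x := by ring
              rw [he, abs_mul, mul_comm]
              exact mul_le_mul_of_nonneg_right (hL t u x) (abs_nonneg _)
          _ = ℒ * S := (Finset.mul_sum _ _ _).symm
      have h2 : |(∑ o, V (t + 1) fun x' => ∑ x, c x * M t u o x x') -
          ∑ o, V (t + 1) fun x' => ∑ x, c' x * M t u o x x'| ≤ (ℒ * (k : ℝ) + 𝒦) * S := by
        rw [← Finset.sum_sub_distrib]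
        calc |∑ o, ((V (t + 1) fun x' => ∑ x, c x * M t u o x x') -
                V (t + 1) fun x' => ∑ x, c' x * M t u o x x')|
            ≤ ∑ o, |(V (t + 1) fun x' => ∑ x, c x * M t u o x x') -
                V (t + 1) fun x' => ∑ x, c' x * M t u o x x'| := Finset.abs_sum_le_sum_abs _ _
          _ ≤ ∑ o, (ℒ * (k : ℝ) + 𝒦) *
                ∑ x', |(∑ x, c x * M t u o x x') - ∑ x, c' x * M t u o x x'| := by
              apply Finset.sum_le_sum
              intro o _
              exact ih (t + 1) (by omega) _ _
                (fun x' => Finset.sum_nonneg fun x _ => mul_nonneg (hc x) (hMnn t u o x x'))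
                (fun x' => Finset.sum_nonneg fun x _ => mul_nonneg (hc' x) (hMnn t u o x x'))
          _ ≤ ∑ o, (ℒ * (k : ℝ) + 𝒦) * ∑ x', ∑ x, |c x - c' x| * M t u o x x' := by
              apply Finset.sum_le_sum
              intro o _
              apply mul_le_mul_of_nonneg_left _ hcoef
              apply Finset.sum_le_sum
              intro x' _
              rw [← Finset.sum_sub_distrib]
              calc |∑ x, (c x * M t u o x x' - c' x * M t u o x x')|
                  ≤ ∑ x, |c x * M t u o x x' - c' x * M t u o x x'| :=
                    Finset.abs_sum_le_sum_abs _ _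
                _ ≤ ∑ x, |c x - c' x| * M t u o x x' := by
                    apply Finset.sum_le_sum
                    intro x _
                    have he : c x * M t u o x x' - c' x * M t u o x x' =
                        (c x - c' x) * M t u o x x' := by ring
                    rw [he, abs_mul, abs_of_nonneg (hMnn t u o x x')]
          _ = (ℒ * (k : ℝ) + 𝒦) * S := by
              rw [← Finset.mul_sum]
              congr 1
              have hc1 : ∀ o : 𝕆, (∑ x', ∑ x, |c x - c' x| * M t u o x x') =
                  ∑ x, ∑ x', |c x - c' x| * M t u o x x' := fun o => Finset.sum_comm
              simp_rw [hc1]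
              rw [Finset.sum_comm]
              simp_rw [← Finset.mul_sum, hMsub t u, mul_one]
              exact hSdef.symm
      calc |f u - g u| = |((∑ x, c x * L t u x) - ∑ x, c' x * L t u x) +
            ((∑ o, V (t + 1) fun x' => ∑ x, c x * M t u o x x') -
              ∑ o, V (t + 1) fun x' => ∑ x, c' x * M t u o x x')| := by
            rw [hfdef, hgdef]; ring_nf
        _ ≤ _ := le_trans (abs_add_le _ _) (add_le_add h1 h2)
    have hbf : BddBelow (Set.range f) := Set.Finite.bddBelow (Set.finite_range f)
    have hbg : BddBelow (Set.range g) := Set.Finite.bddBelow (Set.finite_range g)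
    have hε : (ℒ * ((k + 1 : ℕ) : ℝ) + 𝒦) * S = ℒ * S + (ℒ * (k : ℝ) + 𝒦) * S := by
      push_cast; ring
    rw [hVrec t htT c, hVrec t htT c', ← hfdef, ← hgdef, hε]
    rw [abs_sub_le_iff]
    constructor
    · rw [sub_le_iff_le_add]
      obtain ⟨u, hu⟩ := exists_eq_ciInf_of_finite (f := g)
      calc (⨅ u, f u) ≤ f u := ciInf_le hbf u
        _ ≤ g u + (ℒ * S + (ℒ * (k : ℝ) + 𝒦) * S) := by
            have := key u; rw [abs_le] at this; linarith [this.2]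
        _ = ℒ * S + (ℒ * (k : ℝ) + 𝒦) * S + ⨅ u, g u := by rw [hu]; ring
    · rw [sub_le_iff_le_add]
      obtain ⟨u, hu⟩ := exists_eq_ciInf_of_finite (f := f)
      calc (⨅ u, g u) ≤ g u := ciInf_le hbg u
        _ ≤ f u + (ℒ * S + (ℒ * (k : ℝ) + 𝒦) * S) := by
            have := key u; rw [abs_le] at this; linarith [this.2]
        _ = ℒ * S + (ℒ * (k : ℝ) + 𝒦) * S + ⨅ u, f u := by rw [hu]; ring
end
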